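/- There exists a constant B > 0 (depending only on m, n, μ, ν) such that for every π₀ ∈ Δ_{mn}, the Euclidean distance from π₀ to the transport polytope satisfies dist(π₀, Π(μ,ν)) ≤ B·h(π₀). -/

import Mathlib

/-- A probability vector: nonnegative entries summing to 1. -/
def IsProbVec {a : ℕ} (μ : Fin a → ℝ) : Prop := (∀ i, 0 ≤ μ i) ∧ ∑ i, μ i = 1

/-- The transport polytope `Π(μ,ν)` inside Euclidean space `ℝ^{m×n}`. -/
def transportSet (m n : ℕ) (μ : Fin m → ℝ) (ν : Fin n → ℝ) :
    Set (EuclideanSpace ℝ (Fin m × Fin n)) :=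
  {π | (∀ i j, 0 ≤ π (i, j)) ∧ (∀ i, ∑ j, π (i, j) = μ i) ∧ (∀ j, ∑ i, π (i, j) = ν j)}

/-- The simplex `Δ_{mn}` inside Euclidean space `ℝ^{m×n}`. -/
def deltaSet (m n : ℕ) : Set (EuclideanSpace ℝ (Fin m × Fin n)) :=
  {π | (∀ i j, 0 ≤ π (i, j)) ∧ ∑ i, ∑ j, π (i, j) ≤ 1}

/-- The residual function `h(π) = max{|g(π)|, max_i |r_i(π)|, max_j |c_j(π)|}`. -/
noncomputable def hFun (m n : ℕ) (μ : Fin m → ℝ) (ν : Fin n → ℝ)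
    (π : EuclideanSpace ℝ (Fin m × Fin n)) : ℝ :=
  max |1 - ∑ i, ∑ j, π (i, j)|
    (max (⨆ i, |(∑ j, π (i, j)) - μ i|) (⨆ j, |(∑ i, π (i, j)) - ν j|))

/-- The quadratic GW objective `L(π)` on Euclidean space. -/
noncomputable def LobjE (m n : ℕ) (L : Fin m → Fin n → Fin m → Fin n → ℝ)
    (π : EuclideanSpace ℝ (Fin m × Fin n)) : ℝ :=
  ∑ i, ∑ j, ∑ k, ∑ l, L i j k l * π (i, j) * π (k, l)

/-- The maximal absolute value `K = max |L_{ij,kl}|` of the cost tensor. -/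
noncomputable def Kmax (m n : ℕ) (L : Fin m → Fin n → Fin m → Fin n → ℝ) : ℝ :=
  sSup {v : ℝ | ∃ i j k l, v = |L i j k l|}

lemma l2_le_l1 {ι : Type*} [Fintype ι] (x : EuclideanSpace ℝ ι) :
    ‖x‖ ≤ ∑ i, |x i| := by
  rw [EuclideanSpace.norm_eq]
  have h1 : ∑ i, ‖x i‖ ^ 2 ≤ (∑ i, |x i|) ^ 2 := by
    rw [sq (∑ i, |x i|), Finset.sum_mul]
    refine Finset.sum_le_sum fun i _ => ?_
    rw [Real.norm_eq_abs, sq]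
    exact mul_le_mul_of_nonneg_left
      (Finset.single_le_sum (f := fun j => |x j|) (fun j _ => abs_nonneg _)
        (Finset.mem_univ i)) (abs_nonneg _)
  calc Real.sqrt (∑ i, ‖x i‖ ^ 2) ≤ Real.sqrt ((∑ i, |x i|) ^ 2) :=
        Real.sqrt_le_sqrt h1
    _ = ∑ i, |x i| := Real.sqrt_sq (Finset.sum_nonneg fun i _ => abs_nonneg _)


/-- There is a constant `B > 0` (depending only on `m, n, μ, ν`) such
that `dist(π₀, Π(μ,ν)) ≤ B·h(π₀)` for every `π₀ ∈ Δ_{mn}`. -/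
theorem stmt10 (m n : ℕ) (hm : 0 < m) (hn : 0 < n)
    (μ : Fin m → ℝ) (ν : Fin n → ℝ) (hμ : IsProbVec μ) (hν : IsProbVec ν) :
    ∃ B : ℝ, 0 < B ∧
      ∀ π₀ ∈ deltaSet m n,
        Metric.infDist π₀ (transportSet m n μ ν) ≤ B * hFun m n μ ν π₀ := by
  obtain ⟨hμ0, hμ1⟩ := hμ
  obtain ⟨hν0, hν1⟩ := hν
  have := Fin.pos_iff_nonempty.mp hm
  have := Fin.pos_iff_nonempty.mp hn
  refine ⟨2 * ((m : ℝ) + n + 1), by positivity, ?_⟩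
  intro π₀ hπ₀
  obtain ⟨hpos, hsum1⟩ := hπ₀
  set ε := hFun m n μ ν π₀ with hεdef
  have hεg : |1 - ∑ i, ∑ j, π₀ (i, j)| ≤ ε := le_max_left _ _
  have hεr : ∀ i, |(∑ j, π₀ (i, j)) - μ i| ≤ ε := fun i =>
    le_trans (le_ciSup (f := fun i => |(∑ j, π₀ (i, j)) - μ i|)
      (Set.Finite.bddAbove (Set.finite_range _)) i)
      (le_trans (le_max_left _ _) (le_max_right _ _))
  have hεc : ∀ j, |(∑ i, π₀ (i, j)) - ν j| ≤ ε := fun j =>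
    le_trans (le_ciSup (f := fun j => |(∑ i, π₀ (i, j)) - ν j|)
      (Set.Finite.bddAbove (Set.finite_range _)) j)
      (le_trans (le_max_right _ _) (le_max_right _ _))
  have hε0 : 0 ≤ ε := le_trans (abs_nonneg _) hεg
  -- row sums of π₀
  set a : Fin m → ℝ := fun i => ∑ j, π₀ (i, j) with hadef
  have ha : ∀ i, a i = ∑ j, π₀ (i, j) := fun i => rfl
  have ha0 : ∀ i, 0 ≤ a i := fun i => Finset.sum_nonneg fun j _ => hpos i j
  -- first rescaling
  set f1 : Fin m → Fin n → ℝ := fun i j => π₀ (i, j) * min 1 (μ i / a i) with hf1def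
  have hα0 : ∀ i, 0 ≤ min 1 (μ i / a i) := fun i =>
    le_min zero_le_one (div_nonneg (hμ0 i) (ha0 i))
  have hf10 : ∀ i j, 0 ≤ f1 i j := fun i j => mul_nonneg (hpos i j) (hα0 i)
  have hf1le : ∀ i j, f1 i j ≤ π₀ (i, j) := fun i j =>
    mul_le_of_le_one_right (hpos i j) (min_le_left _ _)
  have hrow1 : ∀ i, ∑ j, f1 i j = min (a i) (μ i) := by
    intro i
    have : ∑ j, f1 i j = a i * min 1 (μ i / a i) := by
      rw [ha, Finset.sum_mul]
    rw [this]
    rcases eq_or_lt_of_le (ha0 i) with h | h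
    · rw [← h, zero_mul, min_eq_left (hμ0 i)]
      -- goal : 0 = min 0 (μ i)?  careful
    · rw [mul_min_of_nonneg _ _ h.le, mul_one,
        mul_div_cancel₀ _ (ne_of_gt h)]
  -- column sums after first rescaling
  set b : Fin n → ℝ := fun j => ∑ i, f1 i j with hbdef
  have hb : ∀ j, b j = ∑ i, f1 i j := fun j => rfl
  have hb0 : ∀ j, 0 ≤ b j := fun j => Finset.sum_nonneg fun i _ => hf10 i j
  have hble : ∀ j, b j ≤ ∑ i, π₀ (i, j) := fun j =>
    Finset.sum_le_sum fun i _ => hf1le i j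
  -- second rescaling
  set f2 : Fin m → Fin n → ℝ := fun i j => f1 i j * min 1 (ν j / b j) with hf2def
  have hβ0 : ∀ j, 0 ≤ min 1 (ν j / b j) := fun j =>
    le_min zero_le_one (div_nonneg (hν0 j) (hb0 j))
  have hf20 : ∀ i j, 0 ≤ f2 i j := fun i j => mul_nonneg (hf10 i j) (hβ0 j)
  have hf2le : ∀ i j, f2 i j ≤ f1 i j := fun i j =>
    mul_le_of_le_one_right (hf10 i j) (min_le_left _ _)
  have hf2le' : ∀ i j, f2 i j ≤ π₀ (i, j) := fun i j => (hf2le i j).trans (hf1le i j)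
  have hcol2 : ∀ j, ∑ i, f2 i j = min (b j) (ν j) := by
    intro j
    have : ∑ i, f2 i j = b j * min 1 (ν j / b j) := by
      rw [hb, Finset.sum_mul]
    rw [this]
    rcases eq_or_lt_of_le (hb0 j) with h | h
    · rw [← h, zero_mul, min_eq_left (hν0 j)]
    · rw [mul_min_of_nonneg _ _ h.le, mul_one,
        mul_div_cancel₀ _ (ne_of_gt h)]
  have hrow2le : ∀ i, ∑ j, f2 i j ≤ μ i := fun i =>
    le_trans (le_trans (Finset.sum_le_sum fun j _ => hf2le i j)
      (hrow1 i).le) (min_le_right _ _)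
  -- errors
  set er : Fin m → ℝ := fun i => μ i - ∑ j, f2 i j with herdef
  set ec : Fin n → ℝ := fun j => ν j - ∑ i, f2 i j with hecdef
  have her0 : ∀ i, 0 ≤ er i := fun i => sub_nonneg.mpr (hrow2le i)
  have hec0 : ∀ j, 0 ≤ ec j := fun j => sub_nonneg.mpr
    (by rw [hcol2 j]; exact min_le_right _ _)
  set T : ℝ := ∑ i, ∑ j, f2 i j with hTdef
  set S : ℝ := ∑ i, er i with hSdef
  have hS : S = 1 - T := by
    rw [hSdef, hTdef]
    rw [Finset.sum_sub_distrib, hμ1]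
  have hSc : ∑ j, ec j = S := by
    rw [hS, Finset.sum_sub_distrib, hν1, hTdef, Finset.sum_comm]
  have hS0 : 0 ≤ S := Finset.sum_nonneg fun i _ => her0 i
  -- the rounded plan
  set F : Fin m → Fin n → ℝ := fun i j => f2 i j + er i * ec j / S with hFdef
  set π : EuclideanSpace ℝ (Fin m × Fin n) := WithLp.toLp 2 (fun p : Fin m × Fin n => F p.1 p.2) with hπdef
  have hπapp : ∀ i j, π (i, j) = F i j := fun i j => rfl
  have herS : ∀ i, S = 0 → er i = 0 := by
    intro i h0
    exact (Finset.sum_eq_zero_iff_of_nonneg (fun i _ => her0 i)).mp h0 i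
      (Finset.mem_univ i)
  have hmem : π ∈ transportSet m n μ ν := by
    refine ⟨fun i j => add_nonneg (hf20 i j)
      (div_nonneg (mul_nonneg (her0 i) (hec0 j)) hS0), ?_, ?_⟩
    · intro i
      have h1 : ∑ j, π (i, j) = (∑ j, f2 i j) + er i * S / S := by
        simp only [hπapp, hFdef]
        rw [Finset.sum_add_distrib, ← Finset.sum_div, ← Finset.mul_sum, hSc]
      rw [h1]
      by_cases h0 : S = 0
      · have h2 : μ i - ∑ j, f2 i j = 0 := herS i h0
        rw [herS i h0, zero_mul, zero_div, add_zero]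
        linarith
      · rw [mul_div_assoc, div_self h0, mul_one]
        show (∑ j, f2 i j) + (μ i - ∑ j, f2 i j) = μ i
        ring
    · intro j
      have h1 : ∑ i, π (i, j) = (∑ i, f2 i j) + S * ec j / S := by
        simp only [hπapp, hFdef]
        rw [Finset.sum_add_distrib, ← Finset.sum_div, ← Finset.sum_mul Finset.univ er (ec j), ← hSdef]
      rw [h1]
      have hecj0 : S = 0 → ec j = 0 := fun h0 =>
        (Finset.sum_eq_zero_iff_of_nonneg (fun j _ => hec0 j)).mp
          (by rw [hSc]; exact h0) j (Finset.mem_univ j)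
      by_cases h0 : S = 0
      · have h2 : ν j - ∑ i, f2 i j = 0 := hecj0 h0
        rw [hecj0 h0, mul_zero, zero_div, add_zero]
        linarith
      · rw [mul_comm S (ec j), mul_div_assoc, div_self h0, mul_one]
        show (∑ i, f2 i j) + (ν j - ∑ i, f2 i j) = ν j
        ring
  -- distance bound
  have hdist : Metric.infDist π₀ (transportSet m n μ ν) ≤ dist π₀ π :=
    Metric.infDist_le_dist_of_mem hmem
  have hnorm : dist π₀ π ≤ ∑ i, ∑ j, |π₀ (i, j) - F i j| := by
    rw [dist_eq_norm]
    refine le_trans (l2_le_l1 _) ?_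
    rw [Fintype.sum_prod_type]
    exact le_of_eq rfl
  -- pointwise error bound
  have hkey : ∀ i j, |π₀ (i, j) - F i j| ≤
      (π₀ (i, j) - f2 i j) + er i * ec j / S := by
    intro i j
    have hx : 0 ≤ π₀ (i, j) - f2 i j := sub_nonneg.mpr (hf2le' i j)
    have ht : 0 ≤ er i * ec j / S :=
      div_nonneg (mul_nonneg (her0 i) (hec0 j)) hS0
    have he : π₀ (i, j) - F i j = (π₀ (i, j) - f2 i j) - er i * ec j / S := by
      rw [hFdef]; ring
    rw [he]
    rw [abs_le]
    constructor <;> linarith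
  -- sum of the rank-one term
  have htsum : ∑ i, ∑ j, er i * ec j / S ≤ S := by
    have hrowt : ∀ i, ∑ j, er i * ec j / S = er i * S / S := by
      intro i
      rw [← Finset.sum_div, ← Finset.mul_sum, hSc]
    have h1 : ∑ i, ∑ j, er i * ec j / S = S * S / S := by
      calc ∑ i, ∑ j, er i * ec j / S = ∑ i, er i * S / S :=
            Finset.sum_congr rfl fun i _ => hrowt i
        _ = (∑ i, er i * S) / S := by rw [Finset.sum_div]
        _ = S * S / S := by rw [← Finset.sum_mul]
    rw [h1]
    by_cases h0 : S = 0
    · simp [h0]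
    · rw [mul_div_assoc, div_self h0, mul_one]
  -- the ℓ¹ bound on π₀ - f2
  set s : ℝ := ∑ i, ∑ j, π₀ (i, j) with hsdef
  have hsa : s = ∑ i, a i := rfl
  have hsT : s - T ≤ ((m : ℝ) + n) * ε := by
    set U : ℝ := ∑ i, ∑ j, f1 i j with hUdef
    have hU : U = ∑ i, min (a i) (μ i) :=
      Finset.sum_congr rfl fun i _ => hrow1 i
    have h1 : s - U ≤ (m : ℝ) * ε := by
      have e : s - U = ∑ i, (a i - min (a i) (μ i)) := by
        rw [hsa, hU, ← Finset.sum_sub_distrib]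
      rw [e]
      calc ∑ i, (a i - min (a i) (μ i)) ≤ ∑ _i : Fin m, ε := by
            refine Finset.sum_le_sum fun i _ => ?_
            rcases le_total (a i) (μ i) with h | h
            · rw [min_eq_left h]; simpa using hε0
            · rw [min_eq_right h]
              have h2 : |a i - μ i| ≤ ε := hεr i
              have h3 := le_abs_self (a i - μ i)
              linarith
        _ = (m : ℝ) * ε := by
            rw [Finset.sum_const, Finset.card_univ, Fintype.card_fin,
              nsmul_eq_mul]
    have h2 : U - T ≤ (n : ℝ) * ε := by
      have hUb : U = ∑ j, b j := by
        rw [hUdef]; exact Finset.sum_comm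
      have hTb : T = ∑ j, min (b j) (ν j) := by
        rw [hTdef, Finset.sum_comm]
        exact Finset.sum_congr rfl fun j _ => hcol2 j
      have e : U - T = ∑ j, (b j - min (b j) (ν j)) := by
        rw [hUb, hTb, ← Finset.sum_sub_distrib]
      rw [e]
      calc ∑ j, (b j - min (b j) (ν j)) ≤ ∑ _j : Fin n, ε := by
            refine Finset.sum_le_sum fun j _ => ?_
            rcases le_total (b j) (ν j) with h | h
            · rw [min_eq_left h]; simpa using hε0
            · rw [min_eq_right h]
              have h2 : |(∑ i, π₀ (i, j)) - ν j| ≤ ε := hεc j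
              have h3 := le_abs_self ((∑ i, π₀ (i, j)) - ν j)
              have h4 := hble j
              linarith
        _ = (n : ℝ) * ε := by
            rw [Finset.sum_const, Finset.card_univ, Fintype.card_fin,
              nsmul_eq_mul]
    linarith
  have hSb : S ≤ ((m : ℝ) + n + 1) * ε := by
    have hεg' : |1 - s| ≤ ε := hεg
    have h1 : 1 - s ≤ |1 - s| := le_abs_self _
    rw [hS]
    linarith
  have hl1 : ∑ i, ∑ j, |π₀ (i, j) - F i j| ≤ 2 * ((m : ℝ) + n + 1) * ε := by
    have e1 : s - T = ∑ i, ∑ j, (π₀ (i, j) - f2 i j) := by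
      have : s - T = ∑ i, ((∑ j, π₀ (i, j)) - ∑ j, f2 i j) := by
        rw [hsa, hTdef, ← Finset.sum_sub_distrib]
      rw [this]
      exact Finset.sum_congr rfl fun i _ => (Finset.sum_sub_distrib ..).symm
    have h1 : ∑ i, ∑ j, |π₀ (i, j) - F i j| ≤
        (s - T) + ∑ i, ∑ j, er i * ec j / S := by
      rw [e1, ← Finset.sum_add_distrib]
      calc ∑ i, ∑ j, |π₀ (i, j) - F i j|
          ≤ ∑ i, ∑ j, ((π₀ (i, j) - f2 i j) + er i * ec j / S) :=
            Finset.sum_le_sum fun i _ => Finset.sum_le_sum fun j _ => hkey i j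
        _ = _ := Finset.sum_congr rfl fun i _ => Finset.sum_add_distrib
    calc ∑ i, ∑ j, |π₀ (i, j) - F i j| ≤ (s - T) + S := by linarith [htsum, h1]
      _ ≤ ((m : ℝ) + n) * ε + ((m : ℝ) + n + 1) * ε := add_le_add hsT hSb
      _ ≤ 2 * ((m : ℝ) + n + 1) * ε := by nlinarith [hε0]
  calc Metric.infDist π₀ (transportSet m n μ ν) ≤ dist π₀ π := hdist
    _ ≤ ∑ i, ∑ j, |π₀ (i, j) - F i j| := hnorm
    _ ≤ 2 * ((m : ℝ) + n + 1) * ε := hl1
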